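/- Let G₁, G₂ be unbounded labeled granularities such that ⊥ groups periodically into G₁ with period length P_{G₁} and period label distance N_{G₁}, and ⊥ groups periodically into G₂ with period length P_{G₂}, and let G' = Select-up(G₁, G₂) be unbounded. Then ⊥ groups periodically into G' with period length P_{G'} = lcm(P_{G₁}, P_{G₂}) and period label distance N_{G'} = lcm(P_{G₁}, P_{G₂})·N_{G₁}/P_{G₁}. -/

import Mathlib

/-- A labeled granularity over a linearly ordered time domain `T`:
a label set `labels ⊆ ℤ` and a map `gran` assigning to each label a granule
(a subset of `T`); granules are empty outside the label set, granules with
larger labels come later, and between two non-empty granules all granules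
(with label in the label set) are non-empty. -/
structure Granularity (T : Type*) [LinearOrder T] where
  labels : Set ℤ
  gran : ℤ → Set T
  empty_outside : ∀ i, i ∉ labels → gran i = ∅
  mono : ∀ i ∈ labels, ∀ j ∈ labels, i < j → (gran i).Nonempty → (gran j).Nonempty →
    ∀ x ∈ gran i, ∀ y ∈ gran j, x < y
  no_gaps : ∀ i ∈ labels, ∀ j ∈ labels, i < j → (gran i).Nonempty → (gran j).Nonempty →
    ∀ k ∈ labels, i < k → k < j → (gran k).Nonempty

variable {T : Type*} [LinearOrder T]

/-- `G` is full-integer labeled. -/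
def FullInteger (G : Granularity T) : Prop := G.labels = Set.univ

/-- `G` is unbounded: the label set has no least and no greatest element, and
no granule of `G` is empty. -/
def Unbounded (G : Granularity T) : Prop :=
  (∀ i ∈ G.labels, ∃ j ∈ G.labels, j < i) ∧
  (∀ i ∈ G.labels, ∃ j ∈ G.labels, i < j) ∧
  (∀ i ∈ G.labels, (G.gran i).Nonempty)

/-- `G` groups into `H`: every non-empty granule of `H` is a union of granules of `G`. -/
def GroupsInto (G H : Granularity T) : Prop :=
  ∀ j ∈ H.labels, (H.gran j).Nonempty →
    ∃ S ⊆ G.labels, H.gran j = ⋃ i ∈ S, G.gran i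

/-- `G` groups periodically into `H` with period length `P` and
period label distance `N`. -/
def GroupsPeriodicallyInto (G H : Granularity T) (P N : ℤ) : Prop :=
  GroupsInto G H ∧ 0 < P ∧ 0 < N ∧
  (∀ i ∈ H.labels, i + N ∈ H.labels ∨ ∃ g, IsGreatest H.labels g ∧ g < i + N) ∧
  (∀ i ∈ H.labels, ∀ k : ℕ, ∀ j : ℕ → ℤ,
    (∀ r ≤ k, j r ∈ G.labels) →
    H.gran i = ⋃ r ∈ Finset.range (k + 1), G.gran (j r) →
    i + N ∈ H.labels → (H.gran (i + N)).Nonempty →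
    (∀ r ≤ k, j r + P ∈ G.labels) ∧
      H.gran (i + N) = ⋃ r ∈ Finset.range (k + 1), G.gran (j r + P)) ∧
  (∀ s, IsLeast {i | i ∈ H.labels ∧ (H.gran i).Nonempty} s →
    s + N ∈ H.labels ∧ (H.gran (s + N)).Nonempty)

/-- `B` is a bottom granularity: full-integer labeled with all granules non-empty.
(That it groups into the granularities under consideration is stated separately.) -/
def IsBottom (B : Granularity T) : Prop :=
  B.labels = Set.univ ∧ ∀ i, (B.gran i).Nonempty

/-- `up(z)_G^H = z'`: `z'` is the unique label of `H` whose granule contains `G(z)`. -/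
def UpDef (G H : Granularity T) (z z' : ℤ) : Prop :=
  z ∈ G.labels ∧ z' ∈ H.labels ∧ G.gran z ⊆ H.gran z' ∧
  ∀ w ∈ H.labels, G.gran z ⊆ H.gran w → w = z'

/-- `l_G = lG`: `lG = up(i)_⊥^G` where `i` is the smallest positive integer for
which `up(i)_⊥^G` is defined (`B` plays the role of `⊥`). -/
def IsFirstLabel (B G : Granularity T) (lG : ℤ) : Prop :=
  ∃ i : ℤ, 0 < i ∧ UpDef B G i lG ∧
    ∀ i', 0 < i' → (∃ z', UpDef B G i' z') → i ≤ i'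

/-- `L̂_G^P`: the set of labels `i ∈ L_G` such that `⊥(n) ⊆ G(i)` for some
`n` with `1 ≤ n ≤ P` (`B` plays the role of `⊥`). -/
def LHat (B G : Granularity T) (P : ℤ) : Set ℤ :=
  {i | i ∈ G.labels ∧ ∃ n : ℤ, 1 ≤ n ∧ n ≤ P ∧ B.gran n ⊆ G.gran i}

/-- `G` is finer than `H`: every granule of `G` is contained in some granule of `H`. -/
def FinerThan (G H : Granularity T) : Prop :=
  ∀ i ∈ G.labels, ∃ j ∈ H.labels, G.gran i ⊆ H.gran j

/-- `G` partitions `H`. -/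
def Partitions (G H : Granularity T) : Prop :=
  GroupsInto G H ∧ FinerThan G H

/-- `G₁` is a label-aligned subgranularity of `G₂`. -/
def LabelAlignedSub (G₁ G₂ : Granularity T) : Prop :=
  G₁.labels ⊆ G₂.labels ∧ ∀ i ∈ G₁.labels, (G₁.gran i).Nonempty → G₁.gran i = G₂.gran i

/-- `Δ_k^l(S)`: the elements of the ordered set `S` occupying positions
`k, k+1, …, k+l−1`, positions counted (1-based) from the first element when
`k > 0` and (negatively, `-1`-based) from the last element backwards when `k < 0`. -/
def Delta (k l : ℤ) (S : Set ℤ) : Set ℤ :=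
  {a ∈ S | ∃ p : ℤ,
    ((0 < k ∧ 1 ≤ p ∧ {x ∈ S | x ≤ a}.Finite ∧ ({x ∈ S | x ≤ a}.ncard : ℤ) = p) ∨
     (k < 0 ∧ p ≤ -1 ∧ {x ∈ S | a ≤ x}.Finite ∧ ({x ∈ S | a ≤ x}.ncard : ℤ) = -p)) ∧
    k ≤ p ∧ p ≤ k + l - 1}


section Aux

variable {T : Type*} [LinearOrder T]

lemma bottom_lab {B : Granularity T} (hB : IsBottom B) (n : ℤ) : n ∈ B.labels := by
  simp [hB.1]

lemma bottom_disjoint {B : Granularity T} (hB : IsBottom B) {n m : ℤ} {x : T}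
    (h1 : x ∈ B.gran n) (h2 : x ∈ B.gran m) : n = m := by
  by_contra h
  rcases lt_or_gt_of_ne h with hl | hl
  · exact lt_irrefl x (B.mono n (bottom_lab hB n) m (bottom_lab hB m) hl (hB.2 n) (hB.2 m) x h1 x h2)
  · exact lt_irrefl x (B.mono m (bottom_lab hB m) n (bottom_lab hB n) hl (hB.2 m) (hB.2 n) x h2 x h1)

lemma exists_enum (S : Set ℤ) (hfin : S.Finite) (hne : S.Nonempty) :
    ∃ (k : ℕ) (j : ℕ → ℤ), ∀ n, n ∈ S ↔ ∃ r ≤ k, j r = n := by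
  classical
  obtain ⟨F, rfl⟩ : ∃ F : Finset ℤ, ↑F = S := ⟨hfin.toFinset, hfin.coe_toFinset⟩
  have hF : 0 < F.card := Finset.card_pos.2 (by simpa using hne)
  refine ⟨F.card - 1, fun r => if h : r < F.card then (F.equivFin.symm ⟨r, h⟩ : ℤ) else 0, fun n => ?_⟩
  constructor
  · intro hn
    obtain ⟨r, hr⟩ := F.equivFin.symm.surjective ⟨n, hn⟩
    refine ⟨r, by omega, ?_⟩
    dsimp only
    rw [dif_pos r.isLt]
    have : (⟨(r : ℕ), r.isLt⟩ : Fin F.card) = r := by ext; rfl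
    rw [this, hr]
  · rintro ⟨r, hr, rfl⟩
    have hrc : r < F.card := by omega
    dsimp only
    rw [dif_pos hrc]
    exact Finset.mem_coe.2 (F.equivFin.symm ⟨r, hrc⟩).2

lemma finite_decomp (B H : Granularity T) (hB : IsBottom B)
    (hg : GroupsInto B H) (hu : Unbounded H) (i : ℤ) (hi : i ∈ H.labels) :
    ∃ (k : ℕ) (j : ℕ → ℤ), H.gran i = ⋃ r ∈ Finset.range (k + 1), B.gran (j r) := by
  have hne := hu.2.2 i hi
  obtain ⟨S, _, hdec⟩ := hg i hi hne
  obtain ⟨im, him, hltm⟩ := hu.1 i hi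
  obtain ⟨ip, hip, hltp⟩ := hu.2.1 i hi
  have hnem := hu.2.2 _ him
  have hnep := hu.2.2 _ hip
  obtain ⟨x, hx⟩ := id hnem
  obtain ⟨y, hy⟩ := id hnep
  obtain ⟨Sm, _, hdecm⟩ := hg _ him hnem
  obtain ⟨Sp, _, hdecp⟩ := hg _ hip hnep
  have hx' : x ∈ ⋃ n ∈ Sm, B.gran n := hdecm ▸ hx
  have hy' : y ∈ ⋃ n ∈ Sp, B.gran n := hdecp ▸ hy
  simp only [Set.mem_iUnion] at hx' hy'
  obtain ⟨mm, _, hxm⟩ := hx'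
  obtain ⟨mp, _, hym⟩ := hy'
  have hbound : S ⊆ Set.Icc mm mp := by
    intro n hn
    obtain ⟨t, ht⟩ := hB.2 n
    have htI : t ∈ H.gran i := by
      rw [hdec]; simp only [Set.mem_iUnion]; exact ⟨n, hn, ht⟩
    have h1 : x < t := H.mono im him i hi hltm ⟨x, hx⟩ hne x hx t htI
    have h2 : t < y := H.mono i hi ip hip hltp hne ⟨y, hy⟩ t htI y hy
    constructor
    · by_contra hc
      push_neg at hc
      have := B.mono n (bottom_lab hB n) mm (bottom_lab hB mm) hc (hB.2 n) (hB.2 mm) t ht x hxm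
      exact absurd h1 (not_lt.2 this.le)
    · by_contra hc
      push_neg at hc
      have := B.mono mp (bottom_lab hB mp) n (bottom_lab hB n) hc (hB.2 mp) (hB.2 n) y hym t ht
      exact absurd h2 (not_lt.2 this.le)
  have hfin : S.Finite := (Set.finite_Icc mm mp).subset hbound
  have hSne : S.Nonempty := by
    obtain ⟨z, hz⟩ := hne
    rw [hdec] at hz
    simp only [Set.mem_iUnion] at hz
    obtain ⟨n, hn, _⟩ := hz
    exact ⟨n, hn⟩
  obtain ⟨k, j, hj⟩ := exists_enum S hfin hSne
  refine ⟨k, j, ?_⟩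
  rw [hdec]
  ext z
  simp only [Set.mem_iUnion, Finset.mem_range]
  constructor
  · rintro ⟨n, hn, hz⟩
    obtain ⟨r, hr, rfl⟩ := (hj n).1 hn
    exact ⟨r, by omega, hz⟩
  · rintro ⟨r, hr, hz⟩
    exact ⟨j r, (hj (j r)).2 ⟨r, by omega, rfl⟩, hz⟩

lemma mem_decomp {B H : Granularity T} (hB : IsBottom B) {i : ℤ} {k : ℕ} {j : ℕ → ℤ} {n : ℤ}
    (hd : H.gran i = ⋃ r ∈ Finset.range (k + 1), B.gran (j r))
    (hn : B.gran n ⊆ H.gran i) : ∃ r ≤ k, j r = n := by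
  obtain ⟨t, ht⟩ := hB.2 n
  have : t ∈ H.gran i := hn ht
  rw [hd] at this
  simp only [Set.mem_iUnion, Finset.mem_range] at this
  obtain ⟨r, hr, htr⟩ := this
  exact ⟨r, by omega, bottom_disjoint hB htr ht⟩

lemma step_label {B H : Granularity T} {P N : ℤ} (hu : Unbounded H)
    (hp : GroupsPeriodicallyInto B H P N) : ∀ i ∈ H.labels, i + N ∈ H.labels := by
  intro i hi
  rcases hp.2.2.2.1 i hi with h | ⟨g, hg, _⟩
  · exact h
  · obtain ⟨j, hj, hgj⟩ := hu.2.1 g hg.1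
    exact absurd (hg.2 hj) (not_le.2 hgj)

lemma iterate_shift {B H : Granularity T} (hB : IsBottom B) (hu : Unbounded H)
    {P N : ℤ} (hp : GroupsPeriodicallyInto B H P N) (t : ℕ) :
    ∀ i ∈ H.labels, ∀ (k : ℕ) (j : ℕ → ℤ),
      H.gran i = ⋃ r ∈ Finset.range (k + 1), B.gran (j r) →
      (i + (t : ℤ) * N ∈ H.labels ∧
        H.gran (i + (t : ℤ) * N) = ⋃ r ∈ Finset.range (k + 1), B.gran (j r + (t : ℤ) * P)) := by
  induction t with
  | zero =>
    intro i hi k j hd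
    simp only [Nat.cast_zero, zero_mul, add_zero]
    exact ⟨hi, hd⟩
  | succ t ih =>
    intro i hi k j hd
    obtain ⟨h1, h2⟩ := ih i hi k j hd
    have h3 : i + (t : ℤ) * N + N ∈ H.labels := step_label hu hp _ h1
    have h4 : (H.gran (i + (t : ℤ) * N + N)).Nonempty := hu.2.2 _ h3
    have h5 := hp.2.2.2.2.1 (i + (t : ℤ) * N) h1 k (fun r => j r + (t : ℤ) * P)
      (fun r _ => bottom_lab hB _) h2 h3 h4
    have e1 : i + ((t : ℕ) + 1 : ℕ) * N = i + (t : ℤ) * N + N := by push_cast; ring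
    rw [e1]
    refine ⟨h3, ?_⟩
    rw [h5.2]
    refine Set.iUnion₂_congr fun r _ => ?_
    show B.gran (j r + (t : ℤ) * P + P) = _
    congr 1
    push_cast
    ring

end Aux

theorem select_up_periodicity (B G₁ G₂ G' : Granularity T)
    (P₁ N₁ P₂ N₂ : ℤ)
    (hB : IsBottom B) (h₁u : Unbounded G₁) (h₂u : Unbounded G₂) (hG'u : Unbounded G')
    (h₁ : GroupsPeriodicallyInto B G₁ P₁ N₁)
    (h₂ : GroupsPeriodicallyInto B G₂ P₂ N₂)
    (hlab : G'.labels = {i ∈ G₁.labels |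
        ∃ j ∈ G₂.labels, (G₂.gran j).Nonempty ∧ G₂.gran j ⊆ G₁.gran i})
    (hgran : ∀ i ∈ G'.labels, G'.gran i = G₁.gran i) :
    GroupsPeriodicallyInto B G' ((Int.lcm P₁ P₂ : ℤ))
      ((Int.lcm P₁ P₂ : ℤ) * N₁ / P₁) := by
    classical
  set L : ℤ := (Int.lcm P₁ P₂ : ℤ) with hLdef
  have hP₁ := h₁.2.1
  have hN₁pos := h₁.2.2.1
  have hP₂ := h₂.2.1
  have hN₂pos := h₂.2.2.1
  obtain ⟨q₁, hq₁⟩ : P₁ ∣ L := Int.dvd_lcm_left P₁ P₂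
  obtain ⟨q₂, hq₂⟩ : P₂ ∣ L := Int.dvd_lcm_right P₁ P₂
  have hLpos : 0 < L := by
    have : Int.lcm P₁ P₂ ≠ 0 := by
      simp only [Int.lcm]
      exact Nat.lcm_ne_zero (Int.natAbs_ne_zero.2 hP₁.ne') (Int.natAbs_ne_zero.2 hP₂.ne')
    rw [hLdef]
    exact_mod_cast Nat.pos_of_ne_zero this
  have hq₁pos : 0 < q₁ := by nlinarith
  have hq₂pos : 0 < q₂ := by nlinarith
  have hN' : L * N₁ / P₁ = q₁ * N₁ := by
    rw [hq₁, mul_assoc, Int.mul_ediv_cancel_left _ hP₁.ne']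
  have hm₁ : ((q₁.toNat : ℤ)) = q₁ := Int.toNat_of_nonneg hq₁pos.le
  have hm₂ : ((q₂.toNat : ℤ)) = q₂ := Int.toNat_of_nonneg hq₂pos.le
  have hsub : G'.labels ⊆ G₁.labels := by
    rw [hlab]; intro i hi; exact hi.1
  refine ⟨?_, hLpos, ?_, ?_, ?_, ?_⟩
  · -- GroupsInto B G'
    intro i hi hne
    have hi₁ := hsub hi
    have hne₁ : (G₁.gran i).Nonempty := by rwa [hgran i hi] at hne
    obtain ⟨S, hS, hd⟩ := h₁.1 i hi₁ hne₁
    exact ⟨S, hS, by rw [hgran i hi, hd]⟩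
  · rw [hN']; exact mul_pos hq₁pos hN₁pos
  · -- labels shift
    intro i hi
    left
    rw [hN']
    rw [hlab] at hi ⊢
    obtain ⟨hi₁, j, hj₂, hjne, hjsub⟩ := hi
    obtain ⟨k₁, b, hd₁⟩ := finite_decomp B G₁ hB h₁.1 h₁u i hi₁
    obtain ⟨k₂, a, hd₂⟩ := finite_decomp B G₂ hB h₂.1 h₂u j hj₂
    obtain ⟨hl₁, he₁⟩ := iterate_shift hB h₁u h₁ q₁.toNat i hi₁ k₁ b hd₁
    obtain ⟨hl₂, he₂⟩ := iterate_shift hB h₂u h₂ q₂.toNat j hj₂ k₂ a hd₂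
    rw [hm₁] at hl₁ he₁
    rw [hm₂] at hl₂ he₂
    have hLq₁ : q₁ * P₁ = L := by rw [hq₁]; ring
    have hLq₂ : q₂ * P₂ = L := by rw [hq₂]; ring
    rw [hLq₁] at he₁
    rw [hLq₂] at he₂
    refine ⟨hl₁, j + q₂ * N₂, hl₂, h₂u.2.2 _ hl₂, ?_⟩
    rw [he₁, he₂]
    intro x hx
    simp only [Set.mem_iUnion, Finset.mem_range] at hx ⊢
    obtain ⟨r, hr, hxr⟩ := hx
    have hsub' : B.gran (a r) ⊆ G₁.gran i := by
      refine Set.Subset.trans ?_ hjsub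
      rw [hd₂]
      intro t ht
      simp only [Set.mem_iUnion, Finset.mem_range]
      exact ⟨r, hr, ht⟩
    obtain ⟨s, hs, hbs⟩ := mem_decomp hB hd₁ hsub'
    exact ⟨s, by omega, by rw [hbs]; exact hxr⟩
  · -- main periodicity condition
    intro i hi k j _ hdec hiN hneN
    refine ⟨fun r _ => bottom_lab hB _, ?_⟩
    have hi₁ := hsub hi
    have hd : G₁.gran i = ⋃ r ∈ Finset.range (k + 1), B.gran (j r) := by
      rw [← hgran i hi]; exact hdec
    obtain ⟨hl₁, he₁⟩ := iterate_shift hB h₁u h₁ q₁.toNat i hi₁ k j hd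
    rw [hm₁] at hl₁ he₁
    have hLq₁ : q₁ * P₁ = L := by rw [hq₁]; ring
    rw [hLq₁] at he₁
    rw [hgran _ hiN, hN', he₁]
  · -- least condition: vacuous
    intro s hs
    exfalso
    obtain ⟨jj, hjj, hjs⟩ := hG'u.1 s hs.1.1
    exact absurd (hs.2 ⟨hjj, hG'u.2.2 jj hjj⟩) (not_le.2 hjs)
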